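/- Let α be a real number and ε > 0. Then there exist infinitely many positive integers r such that ‖α r²‖_{ℝ/ℤ} < ε, where ‖x‖_{ℝ/ℤ} denotes the distance from x to the nearest integer. -/

import Mathlib

open Combinatorics

/-- Norm on the unit circle is at most the absolute value of a representative. -/
lemma norm_addCircle_le_abs (x : ℝ) : ‖(↑x : AddCircle (1 : ℝ))‖ ≤ |x| := by
  rw [AddCircle.norm_eq]
  simp only [inv_one, one_mul, mul_one]
  calc |x - round x| ≤ |x - (0 : ℤ)| := round_le x 0
  _ = |x| := by simp

/-- If the fractional parts of `x` and `y` land in the same `1/m` grid cell, then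
`x - y` is within `1/m` of an integer. -/
lemma norm_addCircle_sub_lt {x y : ℝ} {m : ℕ} (hm : 0 < m)
    (h : ⌊Int.fract x * m⌋ = ⌊Int.fract y * m⌋) :
    ‖(↑(x - y) : AddCircle (1 : ℝ))‖ < 1 / m := by
  have hfr : |Int.fract x - Int.fract y| < 1 / m := by
    have h1 : |Int.fract x * m - Int.fract y * m| < 1 :=
      Int.abs_sub_lt_one_of_floor_eq_floor h
    have hm' : (0 : ℝ) < m := by exact_mod_cast hm
    rw [← sub_mul, abs_mul, abs_of_pos hm'] at h1
    rw [lt_div_iff₀ hm']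
    linarith
  have key : x - y = (Int.fract x - Int.fract y) + ((⌊x⌋ : ℝ) - ⌊y⌋) := by
    rw [Int.fract, Int.fract]; push_cast; ring
  calc ‖(↑(x - y) : AddCircle (1 : ℝ))‖
      = |(x - y) - round (x - y)| := by
        rw [AddCircle.norm_eq]; simp
    _ ≤ |(x - y) - ((⌊x⌋ - ⌊y⌋ : ℤ) : ℝ)| := round_le _ _
    _ = |Int.fract x - Int.fract y| := by
        rw [key]; push_cast; ring_nf
    _ < 1 / m := hfr

/-- Key lemma: for any real `β` and `ε > 0` there is a positive integer `d`
with `‖β d²‖ < ε` on the circle. -/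
lemma exists_quadratic_small (β : ℝ) (ε : ℝ) (hε : 0 < ε) :
    ∃ d : ℕ, 0 < d ∧ ‖(↑(β * (d : ℝ) ^ 2) : AddCircle (1 : ℝ))‖ < ε := by
  set γ : ℝ := β / 2 with hγ
  obtain ⟨m, hm⟩ := exists_nat_gt (2 / ε)
  have hm0 : 0 < m := by
    by_contra h
    push_neg at h
    interval_cases m
    simp at hm
    nlinarith [div_pos (by norm_num : (0:ℝ) < 2) hε]
  have hmR : (0 : ℝ) < m := by exact_mod_cast hm0
  -- the coloring
  set C : ℕ → Fin m := fun n =>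
    ⟨(⌊Int.fract (γ * (n : ℝ) ^ 2) * m⌋).toNat, by
      have h0 : (0 : ℝ) ≤ Int.fract (γ * (n : ℝ) ^ 2) * m :=
        mul_nonneg (Int.fract_nonneg _) hmR.le
      have h1 : Int.fract (γ * (n : ℝ) ^ 2) * m < m := by
        have := Int.fract_lt_one (γ * (n : ℝ) ^ 2)
        nlinarith
      have : ⌊Int.fract (γ * (n : ℝ) ^ 2) * m⌋ < (m : ℤ) := by
        rw [Int.floor_lt]; exact_mod_cast h1
      omega
      ⟩ with hC
  obtain ⟨a, ha, b, c, hmono⟩ := exists_mono_homothetic_copy ({0, 1, 2} : Finset ℕ) C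
  have h0 := hmono 0 (by simp)
  have h1 := hmono 1 (by simp)
  have h2 := hmono 2 (by simp)
  have e01 : C (b) = C (a + b) := by
    simpa using h0.trans h1.symm
  have e12 : C (a + b) = C (2 * a + b) := by
    have : a • 2 + b = 2 * a + b := by ring
    rw [this] at h2
    simpa using h1.trans h2.symm
  -- extract floor equalities
  have floor_eq : ∀ {u v : ℕ}, C u = C v →
      ⌊Int.fract (γ * (u : ℝ) ^ 2) * m⌋ = ⌊Int.fract (γ * (v : ℝ) ^ 2) * m⌋ := by
    intro u v h
    have := Fin.mk.injEq _ _ _ _ ▸ h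
    have h' : (⌊Int.fract (γ * (u : ℝ) ^ 2) * m⌋).toNat
        = (⌊Int.fract (γ * (v : ℝ) ^ 2) * m⌋).toNat := by
      simpa [hC, Fin.ext_iff] using h
    have hu : 0 ≤ ⌊Int.fract (γ * (u : ℝ) ^ 2) * m⌋ :=
      Int.floor_nonneg.2 (mul_nonneg (Int.fract_nonneg _) hmR.le)
    have hv : 0 ≤ ⌊Int.fract (γ * (v : ℝ) ^ 2) * m⌋ :=
      Int.floor_nonneg.2 (mul_nonneg (Int.fract_nonneg _) hmR.le)
    omega
  have d01 : ‖(↑(γ * ((a + b : ℕ) : ℝ) ^ 2 - γ * ((b : ℕ) : ℝ) ^ 2) : AddCircle (1 : ℝ))‖ < 1 / m :=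
    norm_addCircle_sub_lt hm0 (floor_eq e01.symm)
  have d12 : ‖(↑(γ * ((2 * a + b : ℕ) : ℝ) ^ 2 - γ * ((a + b : ℕ) : ℝ) ^ 2) : AddCircle (1 : ℝ))‖ < 1 / m :=
    norm_addCircle_sub_lt hm0 (floor_eq e12.symm)
  refine ⟨a, ha, ?_⟩
  -- β a² = (x₂ - x₁) - (x₁ - x₀)
  have key : β * (a : ℝ) ^ 2 =
      (γ * ((2 * a + b : ℕ) : ℝ) ^ 2 - γ * ((a + b : ℕ) : ℝ) ^ 2)
      - (γ * ((a + b : ℕ) : ℝ) ^ 2 - γ * ((b : ℕ) : ℝ) ^ 2) := by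
    push_cast [hγ]; ring
  rw [key]
  have hsub : (↑((γ * ((2 * a + b : ℕ) : ℝ) ^ 2 - γ * ((a + b : ℕ) : ℝ) ^ 2)
      - (γ * ((a + b : ℕ) : ℝ) ^ 2 - γ * ((b : ℕ) : ℝ) ^ 2)) : AddCircle (1 : ℝ))
      = (↑(γ * ((2 * a + b : ℕ) : ℝ) ^ 2 - γ * ((a + b : ℕ) : ℝ) ^ 2) : AddCircle (1 : ℝ))
      - ↑(γ * ((a + b : ℕ) : ℝ) ^ 2 - γ * ((b : ℕ) : ℝ) ^ 2) :=
    QuotientAddGroup.mk_sub _ _ _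
  rw [hsub]
  calc ‖_ - _‖ ≤ _ + _ := norm_sub_le _ _
  _ < 1 / m + 1 / m := add_lt_add d12 d01
  _ ≤ ε := by
    rw [← add_div]
    rw [div_le_iff₀ hmR]
    rw [div_lt_iff₀ hε] at hm
    nlinarith

/-- **Quadratic recurrence.** For any real `α` and `ε > 0` there are infinitely
many positive integers `r` with `‖α r²‖_{ℝ/ℤ} < ε`. -/
theorem quadratic_recurrence (α : ℝ) (ε : ℝ) (hε : 0 < ε) :
    {r : ℕ | 0 < r ∧ ‖(↑(α * (r : ℝ) ^ 2) : AddCircle (1 : ℝ))‖ < ε}.Infinite := by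
  apply Set.infinite_of_not_bddAbove
  rintro ⟨N, hN⟩
  obtain ⟨d, hd, hnorm⟩ := exists_quadratic_small (α * ((N + 1 : ℕ) : ℝ) ^ 2) ε hε
  have hmem : (N + 1) * d ∈
      {r : ℕ | 0 < r ∧ ‖(↑(α * (r : ℝ) ^ 2) : AddCircle (1 : ℝ))‖ < ε} := by
    constructor
    · positivity
    · have : α * (((N + 1) * d : ℕ) : ℝ) ^ 2 = α * ((N + 1 : ℕ) : ℝ) ^ 2 * (d : ℝ) ^ 2 := by
        push_cast; ring
      rw [this]
      exact hnorm
  have := hN hmem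
  have : N + 1 ≤ (N + 1) * d := Nat.le_mul_of_pos_right _ hd
  omega
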